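/- Let ν ≥ 0. There exists a constant c = c(ν) ≥ 1 such that for all real numbers 0 ≤ a < b and all d > 0 one has c⁻¹·G ≤ ∫_a^b u^ν e^{−d·u} du ≤ c·G, where G = b^ν · ((a + 1/d)/(b + 1/d))^ν · e^{−a·d} · (b − a)/(d·(b − a) + 1). -/

import Mathlib

open MeasureTheory Real

open Set in

-- lower bound lemma
lemma aux_lower (ν : ℝ) (hν : 0 ≤ ν) (a b d : ℝ) (ha : 0 ≤ a) (hab : a < b) (hd : 0 < d)
    (L : ℝ) (hLdef : L = min (b - a) (1/d)) :
    (a + L) ^ ν * Real.exp (-(a * d)) * L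
      ≤ 2 ^ (ν+1) * Real.exp 1 * ∫ u in a..b, u ^ ν * Real.exp (-(d * u)) := by
  have hL : 0 < L := by rw [hLdef]; exact lt_min (by linarith) (by positivity)
  have hLba : L ≤ b - a := hLdef ▸ min_le_left _ _
  have hLd : L ≤ 1/d := hLdef ▸ min_le_right _ _
  have hd1 : d * (1/d) = 1 := by field_simp
  have hdL : d * L ≤ 1 := by nlinarith
  have hfc : Continuous fun u : ℝ => u ^ ν * Real.exp (-(d * u)) := by
    exact (Real.continuous_rpow_const hν).mul (Real.continuous_exp.comp (by continuity))
  have hp : a ≤ a + L/2 := by linarith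
  have hpq : a + L/2 ≤ a + L := by linarith
  have hq : a + L ≤ b := by linarith
  set m0 : ℝ := ((a+L)/2) ^ ν * Real.exp (-(d*(a+L))) with hm0
  have key : m0 * (L/2) ≤ ∫ u in (a+L/2)..(a+L), u ^ ν * Real.exp (-(d * u)) := by
    have h1 : m0 * (L/2) = ∫ _u in (a+L/2)..(a+L), m0 := by
      rw [intervalIntegral.integral_const]; rw [smul_eq_mul]; ring
    rw [h1]
    apply intervalIntegral.integral_mono_on hpq intervalIntegrable_const
      (hfc.intervalIntegrable _ _)
    intro u hu
    have hu1 : (a+L)/2 ≤ u := by have := hu.1; linarith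
    have hu0 : 0 ≤ u := by linarith
    have e1 : ((a+L)/2) ^ ν ≤ u ^ ν := Real.rpow_le_rpow (by positivity) hu1 hν
    have e2 : Real.exp (-(d*(a+L))) ≤ Real.exp (-(d*u)) := by
      apply Real.exp_le_exp.mpr
      nlinarith [hu.2]
    exact mul_le_mul e1 e2 (Real.exp_pos _).le (Real.rpow_nonneg hu0 _)
  have nn1 : 0 ≤ ∫ u in a..(a+L/2), u ^ ν * Real.exp (-(d * u)) := by
    apply intervalIntegral.integral_nonneg hp
    intro u hu
    exact mul_nonneg (Real.rpow_nonneg (by linarith [hu.1]) _) (Real.exp_pos _).le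
  have nn2 : 0 ≤ ∫ u in (a+L)..b, u ^ ν * Real.exp (-(d * u)) := by
    apply intervalIntegral.integral_nonneg hq
    intro u hu
    exact mul_nonneg (Real.rpow_nonneg (by linarith [hu.1]) _) (Real.exp_pos _).le
  have hint : ∀ x y : ℝ, IntervalIntegrable (fun u => u ^ ν * Real.exp (-(d*u))) volume x y :=
    fun x y => hfc.intervalIntegrable x y
  have e1 := intervalIntegral.integral_add_adjacent_intervals
    (hint a (a+L/2)) (hint (a+L/2) (a+L))
  have e2 := intervalIntegral.integral_add_adjacent_intervals
    (hint a (a+L)) (hint (a+L) b)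
  have hIm : m0 * (L/2) ≤ ∫ u in a..b, u ^ ν * Real.exp (-(d * u)) := by
    rw [← e2, ← e1]; linarith
  -- relate constants
  have hsplit : Real.exp (-(d*(a+L))) = Real.exp (-(a*d)) * Real.exp (-(d*L)) := by
    rw [← Real.exp_add]; ring_nf
  have hdiv : ((a+L)/2) ^ ν = (a+L) ^ ν / 2 ^ ν := Real.div_rpow (by linarith) (by norm_num) ν
  have h2ν : (2:ℝ) ^ (ν+1) = 2 ^ ν * 2 := by
    rw [Real.rpow_add (by norm_num), Real.rpow_one]
  have hone : 1 ≤ Real.exp 1 * Real.exp (-(d*L)) := by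
    rw [← Real.exp_add]
    calc (1:ℝ) = Real.exp 0 := Real.exp_zero.symm
    _ ≤ _ := Real.exp_le_exp.mpr (by linarith)
  have heq : 2 ^ (ν+1) * Real.exp 1 * (m0 * (L/2))
      = (Real.exp 1 * Real.exp (-(d*L))) * ((a+L) ^ ν * Real.exp (-(a*d)) * L) := by
    rw [hm0, hdiv, hsplit, h2ν]
    have h2 : (0:ℝ) < 2 ^ ν := Real.rpow_pos_of_pos (by norm_num) ν
    field_simp
  have hH : 0 ≤ (a+L) ^ ν * Real.exp (-(a*d)) * L := by positivity
  have hc0 : 0 ≤ 2 ^ (ν+1) * Real.exp 1 := by positivity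
  calc (a+L) ^ ν * Real.exp (-(a*d)) * L
      ≤ (Real.exp 1 * Real.exp (-(d*L))) * ((a+L) ^ ν * Real.exp (-(a*d)) * L) := by
        nlinarith
    _ = 2 ^ (ν+1) * Real.exp 1 * (m0 * (L/2)) := heq.symm
    _ ≤ _ := by apply mul_le_mul_of_nonneg_left hIm hc0

open Set in

lemma aux_upper (ν : ℝ) (hν : 0 ≤ ν) (a b d : ℝ) (ha : 0 ≤ a) (hab : a < b) (hd : 0 < d)
    (L : ℝ) (hLdef : L = min (b - a) (1/d)) :
    (∫ u in a..b, u ^ ν * Real.exp (-(d * u)))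
      ≤ Real.exp 1 ^ 2 * Real.Gamma (ν+1) * ((a + L) ^ ν * Real.exp (-(a * d)) * L) := by
  have hL : 0 < L := by rw [hLdef]; exact lt_min (by linarith) (by positivity)
  have hLba : L ≤ b - a := hLdef ▸ min_le_left _ _
  have hLd : L ≤ 1/d := hLdef ▸ min_le_right _ _
  have hd1 : d * (1/d) = 1 := by field_simp
  have hdL : d * L ≤ 1 := by nlinarith
  have hfc : Continuous fun u : ℝ => u ^ ν * Real.exp (-(d * u)) :=
    (Real.continuous_rpow_const hν).mul (Real.continuous_exp.comp (by continuity))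
  set f₀ : ℝ → ℝ := fun x => Real.exp (-x) * x ^ ν with hf₀
  have hf₀c : Continuous f₀ :=
    (Real.continuous_exp.comp continuous_neg).mul (Real.continuous_rpow_const hν)
  set C0 : ℝ := (a + L) ^ ν * Real.exp (-(a * d)) * Real.exp 1 ^ 2 with hC0
  have hC0nn : 0 ≤ C0 := by positivity
  set g : ℝ → ℝ := fun u => C0 * f₀ ((u - a)/L + 1) with hg
  have hgc : Continuous g := continuous_const.mul (hf₀c.comp (by continuity))
  -- pointwise bound
  have hfg : ∀ u ∈ Icc a b, u ^ ν * Real.exp (-(d * u)) ≤ g u := by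
    intro u hu
    have hs0 : 0 ≤ u - a := by linarith [hu.1]
    have ht1 : (1:ℝ) ≤ (u - a)/L + 1 := by
      have : 0 ≤ (u - a)/L := div_nonneg hs0 hL.le
      linarith
    have ht0 : (0:ℝ) ≤ (u - a)/L + 1 := by linarith
    -- power part
    have eq1 : (a + L) * ((u - a)/L + 1) = a * (u - a)/L + (u - a) + a + L := by
      field_simp; ring
    have hple : u ≤ (a + L) * ((u - a)/L + 1) := by
      have : 0 ≤ a * (u - a)/L := by positivity
      rw [eq1]; linarith
    have part1 : u ^ ν ≤ (a + L) ^ ν * ((u - a)/L + 1) ^ ν := by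
      rw [← Real.mul_rpow (by linarith) ht0]
      exact Real.rpow_le_rpow (by linarith [hu.1]) hple hν
    -- exponential part
    have hsL : u - a ≤ (1 + d * (u - a)) * L := by
      rcases min_choice (b - a) (1/d) with h | h
      · rw [← hLdef] at h
        nlinarith [mul_nonneg (mul_nonneg hd.le hs0) hL.le, hu.2]
      · rw [← hLdef] at h
        have : d * L = 1 := by rw [h]; exact hd1
        nlinarith
    have hdivL : (u - a)/L ≤ 1 + d * (u - a) := (div_le_iff₀ hL).mpr hsL
    have part2 : Real.exp (-(d * u)) ≤ Real.exp (-(a*d)) * (Real.exp 1 ^ 2 * Real.exp (-((u - a)/L + 1))) := by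
      rw [Real.exp_one_pow, ← Real.exp_add, ← Real.exp_add]
      apply Real.exp_le_exp.mpr
      push_cast
      nlinarith
    calc u ^ ν * Real.exp (-(d * u))
        ≤ ((a + L) ^ ν * ((u - a)/L + 1) ^ ν) *
            (Real.exp (-(a*d)) * (Real.exp 1 ^ 2 * Real.exp (-((u - a)/L + 1)))) := by
          apply mul_le_mul part1 part2 (Real.exp_pos _).le (by positivity)
      _ = g u := by rw [hg, hC0, hf₀]; ring
  have hIg : (∫ u in a..b, u ^ ν * Real.exp (-(d * u))) ≤ ∫ u in a..b, g u :=
    intervalIntegral.integral_mono_on hab.le (hfc.intervalIntegrable _ _)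
      (hgc.intervalIntegrable _ _) hfg
  -- compute ∫ g
  have step0 : (∫ u in a..b, g u) = C0 * ∫ u in a..b, f₀ ((u - a)/L + 1) := by
    rw [hg, intervalIntegral.integral_const_mul]
  have step1 : (∫ u in a..b, f₀ ((u - a)/L + 1)) = ∫ s in (0:ℝ)..(b - a), f₀ (s/L + 1) := by
    simpa using intervalIntegral.integral_comp_sub_right (a := a) (b := b) (fun s => f₀ (s/L + 1)) a
  have step2 : (∫ s in (0:ℝ)..(b - a), f₀ (s/L + 1)) = L * ∫ x in (0:ℝ)..((b - a)/L), f₀ (x + 1) := by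
    have := intervalIntegral.integral_comp_div (a := (0:ℝ)) (b := b - a)
      (f := fun x => f₀ (x + 1)) (ne_of_gt hL)
    simpa [smul_eq_mul] using this
  have step3 : (∫ x in (0:ℝ)..((b - a)/L), f₀ (x + 1)) = ∫ t in (1:ℝ)..((b - a)/L + 1), f₀ t := by
    simpa using intervalIntegral.integral_comp_add_right f₀ 1
  have hΓeq : Real.Gamma (ν+1) = ∫ x in Ioi (0:ℝ), Real.exp (-x) * x ^ ν := by
    rw [Real.Gamma_eq_integral (by linarith : (0:ℝ) < ν + 1)]
    norm_num
  have step4 : (∫ t in (1:ℝ)..((b - a)/L + 1), f₀ t) ≤ Real.Gamma (ν+1) := by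
    have hT1 : (1:ℝ) ≤ (b - a)/L + 1 := by
      have : 0 ≤ (b - a)/L := div_nonneg (by linarith) hL.le
      linarith
    rw [intervalIntegral.integral_of_le hT1, hΓeq]
    apply setIntegral_mono_set (Real.GammaIntegral_convergent (by linarith : (0:ℝ) < ν + 1) |>.congr ?_) ?_ ?_
    · apply ae_of_all; intro x; norm_num [hf₀]
    · refine (ae_restrict_iff' measurableSet_Ioi).mpr (ae_of_all _ fun x hx => ?_)
      exact mul_nonneg (Real.exp_pos _).le (Real.rpow_nonneg (le_of_lt hx) _)
    · have hsub : Ioc (1:ℝ) ((b-a)/L+1) ⊆ Ioi 0 := fun x hx => lt_trans one_pos hx.1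
      exact hsub.eventuallyLE
  have hΓnn : 0 ≤ Real.Gamma (ν+1) := (Real.Gamma_pos_of_pos (by linarith)).le
  calc (∫ u in a..b, u ^ ν * Real.exp (-(d * u)))
      ≤ ∫ u in a..b, g u := hIg
    _ = C0 * (L * ∫ t in (1:ℝ)..((b - a)/L + 1), f₀ t) := by rw [step0, step1, step2, step3]
    _ ≤ C0 * (L * Real.Gamma (ν+1)) := by
        apply mul_le_mul_of_nonneg_left (mul_le_mul_of_nonneg_left step4 hL.le) hC0nn
    _ = Real.exp 1 ^ 2 * Real.Gamma (ν+1) * ((a + L) ^ ν * Real.exp (-(a * d)) * L) := by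
        rw [hC0]; ring

open Set in

lemma aux_GH (ν : ℝ) (hν : 0 ≤ ν) (a b d : ℝ) (ha : 0 ≤ a) (hab : a < b) (hd : 0 < d)
    (L : ℝ) (hLdef : L = min (b - a) (1/d)) :
    (b ^ ν * ((a + 1/d) / (b + 1/d)) ^ ν * Real.exp (-(a * d)) * (b - a)) / (d * (b - a) + 1)
        ≤ (a + L) ^ ν * Real.exp (-(a * d)) * L ∧
    (a + L) ^ ν * Real.exp (-(a * d)) * L
        ≤ 2 ^ (ν+1) *
          ((b ^ ν * ((a + 1/d) / (b + 1/d)) ^ ν * Real.exp (-(a * d)) * (b - a)) / (d * (b - a) + 1)) := by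
  have hL : 0 < L := by rw [hLdef]; exact lt_min (by linarith) (by positivity)
  have hLba : L ≤ b - a := hLdef ▸ min_le_left _ _
  have hLd : L ≤ 1/d := hLdef ▸ min_le_right _ _
  have hd1 : d * (1/d) = 1 := by field_simp
  have hdL : d * L ≤ 1 := by nlinarith
  have hb0 : 0 < b := lt_of_le_of_lt ha hab
  have hbd : 0 < b + 1/d := by positivity
  have had : 0 < a + 1/d := by positivity
  set M : ℝ := b * ((a + 1/d) / (b + 1/d)) with hMdef
  have hM0 : 0 < M := by positivity
  have hDpos : (0:ℝ) < d * (b - a) + 1 := by nlinarith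
  set R : ℝ := (b - a) / (d * (b - a) + 1) with hRdef
  have hR0 : 0 < R := div_pos (by linarith) hDpos
  have hGM : (b ^ ν * ((a + 1/d) / (b + 1/d)) ^ ν * Real.exp (-(a * d)) * (b - a)) / (d * (b - a) + 1)
      = M ^ ν * Real.exp (-(a * d)) * R := by
    rw [hMdef, hRdef, Real.mul_rpow hb0.le (by positivity)]
    ring
  -- R bounds
  have hRL : R ≤ L := by
    rw [hLdef]
    refine le_min ?_ ?_
    · rw [hRdef]; exact div_le_self (by linarith) (by nlinarith)
    · rw [hRdef, div_le_div_iff₀ hDpos hd]; nlinarith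
  have hLR : L ≤ 2 * R := by
    have key : L * (d * (b - a) + 1) ≤ 2 * (b - a) := by
      nlinarith [mul_le_mul_of_nonneg_right hdL (by linarith : (0:ℝ) ≤ b - a)]
    have h2 : 2 * R = 2 * (b - a) / (d * (b - a) + 1) := by rw [hRdef]; ring
    rw [h2, le_div_iff₀ hDpos]; linarith
  -- M bounds
  have haL : a + L = min b (a + 1/d) := by
    rw [hLdef, ← min_add_add_left]
    congr 1
    ring
  have hMb : M ≤ b := by
    have h1 : (a + 1/d) / (b + 1/d) ≤ 1 := (div_le_one hbd).mpr (by linarith)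
    calc M ≤ b * 1 := mul_le_mul_of_nonneg_left h1 hb0.le
    _ = b := mul_one b
  have hMad : M ≤ a + 1/d := by
    have h1 : M = b * (a + 1/d) / (b + 1/d) := by rw [hMdef]; ring
    rw [h1, div_le_iff₀ hbd]
    nlinarith
  have hMm : M ≤ a + L := by rw [haL]; exact le_min hMb hMad
  have hmM : a + L ≤ 2 * M := by
    have h1 : min b (a + 1/d) ≤ b := min_le_left _ _
    have h2 : min b (a + 1/d) ≤ a + 1/d := min_le_right _ _
    have key : min b (a + 1/d) * (b + 1/d) ≤ 2 * b * (a + 1/d) := by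
      nlinarith [mul_le_mul_of_nonneg_right h2 hb0.le,
        mul_le_mul_of_nonneg_right h1 (le_of_lt (by positivity : (0:ℝ) < 1/d)),
        mul_le_mul_of_nonneg_left (by positivity : (0:ℝ) ≤ a) (le_of_lt hb0)]
    have h3 : min b (a + 1/d) ≤ 2 * b * (a + 1/d) / (b + 1/d) := (le_div_iff₀ hbd).mpr key
    have h4 : 2 * b * (a + 1/d) / (b + 1/d) = 2 * M := by rw [hMdef]; ring
    rw [haL]; rw [h4] at h3; exact h3
  -- rpow bounds
  have hMν_le : M ^ ν ≤ (a + L) ^ ν := Real.rpow_le_rpow hM0.le hMm hν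
  have hMν_ge : (a + L) ^ ν ≤ 2 ^ ν * M ^ ν := by
    calc (a + L) ^ ν ≤ (2 * M) ^ ν := Real.rpow_le_rpow (by positivity) hmM hν
    _ = 2 ^ ν * M ^ ν := Real.mul_rpow (by norm_num) hM0.le
  have h2ν : (2:ℝ) ^ (ν+1) = 2 ^ ν * 2 := by
    rw [Real.rpow_add (by norm_num), Real.rpow_one]
  constructor
  · rw [hGM]
    have h1 : M ^ ν * Real.exp (-(a * d)) ≤ (a + L) ^ ν * Real.exp (-(a * d)) :=
      mul_le_mul_of_nonneg_right hMν_le (Real.exp_pos _).le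
    exact mul_le_mul h1 hRL hR0.le (by positivity)
  · rw [hGM]
    have h1 : (a + L) ^ ν * Real.exp (-(a * d)) ≤ (2 ^ ν * M ^ ν) * Real.exp (-(a * d)) :=
      mul_le_mul_of_nonneg_right hMν_ge (Real.exp_pos _).le
    calc (a + L) ^ ν * Real.exp (-(a * d)) * L
        ≤ ((2 ^ ν * M ^ ν) * Real.exp (-(a * d))) * (2 * R) :=
          mul_le_mul h1 hLR hL.le (by positivity)
      _ = 2 ^ (ν+1) * (M ^ ν * Real.exp (-(a * d)) * R) := by rw [h2ν]; ring

lemma aux_pos {A x y : ℝ} (hA : 0 < A) (hx : 0 < x) (hxy : x ≤ A * y) : 0 < y := by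
  rcases lt_or_ge 0 y with h | h
  · exact h
  · exfalso; nlinarith


theorem stmt_0 (ν : ℝ) (hν : 0 ≤ ν) :
    ∃ c : ℝ, 1 ≤ c ∧ ∀ a b d : ℝ, 0 ≤ a → a < b → 0 < d →
      c⁻¹ * ((b ^ ν * ((a + 1/d) / (b + 1/d)) ^ ν * Real.exp (-(a * d)) * (b - a)) /
          (d * (b - a) + 1))
        ≤ (∫ u in a..b, u ^ ν * Real.exp (-(d * u))) ∧
      (∫ u in a..b, u ^ ν * Real.exp (-(d * u)))
        ≤ c * ((b ^ ν * ((a + 1/d) / (b + 1/d)) ^ ν * Real.exp (-(a * d)) * (b - a)) /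
          (d * (b - a) + 1)) := by
  have hE1 : (1:ℝ) < Real.exp 1 := by
    have := Real.add_one_le_exp (1:ℝ); linarith
  have hΓ : 0 < Real.Gamma (ν + 1) := Real.Gamma_pos_of_pos (by linarith)
  have h2ν1 : (2:ℝ) ≤ 2 ^ (ν + 1) := by
    calc (2:ℝ) = 2 ^ (1:ℝ) := (Real.rpow_one 2).symm
    _ ≤ 2 ^ (ν + 1) := Real.rpow_le_rpow_of_exponent_le (by norm_num) (by linarith)
  have h2pos : (0:ℝ) < 2 ^ (ν + 1) := lt_of_lt_of_le (by norm_num) h2ν1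
  refine ⟨2 ^ (ν + 1) * (Real.exp 1 + Real.exp 1 ^ 2 * Real.Gamma (ν + 1)), ?_, ?_⟩
  · have hsum : (0:ℝ) < Real.exp 1 + Real.exp 1 ^ 2 * Real.Gamma (ν + 1) := by
      have := mul_pos (by positivity : (0:ℝ) < Real.exp 1 ^ 2) hΓ
      linarith
    nlinarith [mul_le_mul_of_nonneg_right h2ν1 hsum.le]
  intro a b d ha hab hd
  set c := 2 ^ (ν + 1) * (Real.exp 1 + Real.exp 1 ^ 2 * Real.Gamma (ν + 1)) with hc
  set L := min (b - a) (1/d) with hLdef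
  set G := (b ^ ν * ((a + 1/d) / (b + 1/d)) ^ ν * Real.exp (-(a * d)) * (b - a)) /
      (d * (b - a) + 1) with hG
  set H := (a + L) ^ ν * Real.exp (-(a * d)) * L with hH
  set I := ∫ u in a..b, u ^ ν * Real.exp (-(d * u)) with hI
  obtain ⟨hGH, hHG⟩ := aux_GH ν hν a b d ha hab hd L hLdef
  have hlow : H ≤ 2 ^ (ν+1) * Real.exp 1 * I := aux_lower ν hν a b d ha hab hd L hLdef
  have hup : I ≤ Real.exp 1 ^ 2 * Real.Gamma (ν+1) * H := aux_upper ν hν a b d ha hab hd L hLdef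
  have hL : 0 < L := lt_min (by linarith) (by positivity)
  have hHpos : 0 < H := by
    rw [hH]
    have : 0 < a + L := by linarith
    positivity
  have hA : 0 < 2 ^ (ν+1) * Real.exp 1 := by positivity
  have hIpos : 0 < I := aux_pos hA hHpos hlow
  have hGpos : 0 < G := aux_pos h2pos hHpos hHG
  have hcA : 2 ^ (ν+1) * Real.exp 1 ≤ c := by
    rw [hc]
    have h0 : (0:ℝ) ≤ Real.exp 1 ^ 2 * Real.Gamma (ν+1) := (mul_pos (by positivity) hΓ).le
    nlinarith
  have hcB : 2 ^ (ν+1) * (Real.exp 1 ^ 2 * Real.Gamma (ν+1)) ≤ c := by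
    rw [hc]
    nlinarith [(by positivity : (0:ℝ) < Real.exp 1)]
  have hcpos : 0 < c := lt_of_lt_of_le hA hcA
  constructor
  · rw [inv_mul_le_iff₀ hcpos]
    have h1 : H ≤ c * I := by
      have h3 := mul_le_mul_of_nonneg_right hcA hIpos.le
      linarith
    linarith
  · have h1 : I ≤ Real.exp 1 ^ 2 * Real.Gamma (ν+1) * (2 ^ (ν+1) * G) := by
      nlinarith [mul_le_mul_of_nonneg_left hHG (by positivity : (0:ℝ) ≤ Real.exp 1 ^ 2 * Real.Gamma (ν+1))]
    have h2 : Real.exp 1 ^ 2 * Real.Gamma (ν+1) * (2 ^ (ν+1) * G)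
        = (2 ^ (ν+1) * (Real.exp 1 ^ 2 * Real.Gamma (ν+1))) * G := by ring
    nlinarith [mul_le_mul_of_nonneg_right hcB hGpos.le]
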